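/- Let (Z_n)_{n≥1} be independent nonnegative random variables and p ≥ 2. Then E[(Σ_n Z_n)^{p/2}] ≤ C_p max{ (Σ_n E[Z_n])^{p/2}, Σ_n E[Z_n^{p/2}] } for a constant C_p depending only on p. -/

import Mathlib

open MeasureTheory ProbabilityTheory Filter Finset
open scoped ENNReal Topology

namespace Stmt15Aux

variable {Ω : Type} [MeasurableSpace Ω] {P : Measure Ω}

lemma rpow_self_mul {x : ℝ≥0∞} (hx : x ≠ ∞) {q : ℝ} (hq : 1 ≤ q) :
    x ^ q = x * x ^ (q - 1) := by
  rcases eq_or_ne x 0 with rfl | hx0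
  · rw [ENNReal.zero_rpow_of_pos (by linarith), zero_mul]
  · nth_rewrite 2 [← ENNReal.rpow_one x]
    rw [← ENNReal.rpow_add _ _ hx0 hx]
    norm_num

lemma add_rpow_le (a b : ℝ≥0∞) {r : ℝ} (hr : 0 ≤ r) :
    (a + b) ^ r ≤ 2 ^ r * (a ^ r + b ^ r) := by
  calc (a + b) ^ r ≤ (2 * max a b) ^ r := by
        apply ENNReal.rpow_le_rpow _ hr
        rw [two_mul]
        exact add_le_add (le_max_left a b) (le_max_right a b)
    _ = 2 ^ r * (max a b) ^ r := ENNReal.mul_rpow_of_nonneg _ _ hr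
    _ ≤ 2 ^ r * (a ^ r + b ^ r) := by
        gcongr
        rcases max_cases a b with ⟨h, _⟩ | ⟨h, _⟩ <;> rw [h]
        · exact le_self_add
        · exact le_add_self

lemma iIndepFun_ae_congr {β : ℕ → Type*} {m : ∀ i, MeasurableSpace (β i)}
    {f g : ∀ i, Ω → β i} (hf : iIndepFun f P) (h : ∀ i, f i =ᵐ[P] g i) :
    iIndepFun g P := by
  rw [iIndepFun_iff_measure_inter_preimage_eq_mul] at hf ⊢
  intro S sets hsets
  have hall : ∀ᵐ ω ∂P, ∀ i, f i ω = g i ω := ae_all_iff.2 h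
  have h1 : ∀ i, P (f i ⁻¹' sets i) = P (g i ⁻¹' sets i) := by
    intro i
    apply measure_congr
    filter_upwards [h i] with ω hω
    show (f i ω ∈ sets i) = (g i ω ∈ sets i)
    rw [hω]
  have h2 : P (⋂ i ∈ S, g i ⁻¹' sets i) = P (⋂ i ∈ S, f i ⁻¹' sets i) := by
    apply measure_congr
    filter_upwards [hall] with ω hω
    show (ω ∈ ⋂ i ∈ S, g i ⁻¹' sets i) = (ω ∈ ⋂ i ∈ S, f i ⁻¹' sets i)
    simp only [Set.mem_iInter, Set.mem_preimage]
    refine propext (forall_congr' fun i => forall_congr' fun _ => ?_)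
    rw [hω i]
  rw [h2, hf S hsets]
  exact Finset.prod_congr rfl fun i _ => h1 i

lemma algebra_step {A B m : ℝ≥0∞} (hA : A ≠ ∞) {q : ℝ} (hq : 1 ≤ q)
    (h : A ≤ 2 ^ (q - 1) * (B + m * A ^ ((q - 1) / q))) :
    A ≤ max (2 * 2 ^ (q - 1)) ((4 * 2 ^ (q - 1)) ^ q) * max (m ^ q) B := by
  set K : ℝ≥0∞ := 2 ^ (q - 1) with hK
  have hq0 : (0:ℝ) < q := by linarith
  by_cases hcase : A ≤ (4 * K * m) ^ q
  · calc A ≤ (4 * K * m) ^ q := hcase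
      _ = (4 * K) ^ q * m ^ q := ENNReal.mul_rpow_of_nonneg _ _ hq0.le
      _ ≤ max (2 * K) ((4 * K) ^ q) * max (m ^ q) B :=
          mul_le_mul' (le_max_right _ _) (le_max_left _ _)
  · push_neg at hcase
    have hA0 : A ≠ 0 := (lt_of_le_of_lt zero_le hcase).ne'
    have h4 : 4 * K * m ≤ A ^ (1 / q) := by
      have h5 := ENNReal.rpow_le_rpow hcase.le (by positivity : (0:ℝ) ≤ 1 / q)
      rwa [← ENNReal.rpow_mul, mul_one_div, div_self hq0.ne', ENNReal.rpow_one] at h5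
    have hsplit : A ^ (1 / q) * A ^ ((q - 1) / q) = A := by
      rw [← ENNReal.rpow_add _ _ hA0 hA]
      rw [show 1 / q + (q - 1) / q = 1 by field_simp; ring]
      exact ENNReal.rpow_one A
    have hterm : K * (m * A ^ ((q - 1) / q)) ≤ A / 2 := by
      have h6 : 4 * (K * (m * A ^ ((q - 1) / q))) ≤ A := by
        calc 4 * (K * (m * A ^ ((q - 1) / q))) = (4 * K * m) * A ^ ((q - 1) / q) := by ring
          _ ≤ A ^ (1 / q) * A ^ ((q - 1) / q) := mul_le_mul_left h4 _
          _ = A := hsplit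
      calc K * (m * A ^ ((q - 1) / q)) ≤ A / 4 := by
            rw [ENNReal.le_div_iff_mul_le (by norm_num) (by norm_num)]
            rw [mul_comm]; exact h6
        _ ≤ A / 2 := by gcongr <;> norm_num
    rw [mul_add] at h
    have h7 : A ≤ K * B + A / 2 := h.trans (add_le_add_right hterm _)
    have h8 : A / 2 ≤ K * B := by
      rw [← ENNReal.sub_half hA]
      exact tsub_le_iff_right.2 h7
    have h9 : A ≤ 2 * K * B := by
      rw [ENNReal.div_le_iff_le_mul (by norm_num) (by norm_num)] at h8
      calc A ≤ K * B * 2 := h8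
        _ = 2 * K * B := by ring
    calc A ≤ 2 * K * B := h9
      _ ≤ max (2 * K) ((4 * K) ^ q) * max (m ^ q) B :=
          mul_le_mul' (le_max_left _ _) (le_max_right _ _)

lemma lintegral_sum_rpow_ne_top {W : ℕ → Ω → ℝ≥0∞} (hW : ∀ n, Measurable (W n))
    {q : ℝ} (hq : 1 ≤ q) (hfin : ∀ n, ∫⁻ ω, W n ω ^ q ∂P ≠ ∞) (s : Finset ℕ) :
    ∫⁻ ω, (∑ i ∈ s, W i ω) ^ q ∂P ≠ ∞ := by
  classical
  induction s using Finset.induction with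
  | empty =>
      simp [ENNReal.zero_rpow_of_pos (show (0:ℝ) < q by linarith)]
  | @insert a s ha ih =>
      have hmeas : Measurable fun ω => (∑ i ∈ s, W i ω) ^ q :=
        (Finset.measurable_sum s fun i _ => hW i).pow_const q
      have hb : ∫⁻ ω, (∑ i ∈ insert a s, W i ω) ^ q ∂P
          ≤ 2 ^ q * (∫⁻ ω, W a ω ^ q ∂P + ∫⁻ ω, (∑ i ∈ s, W i ω) ^ q ∂P) := by
        calc ∫⁻ ω, (∑ i ∈ insert a s, W i ω) ^ q ∂P
            ≤ ∫⁻ ω, 2 ^ q * (W a ω ^ q + (∑ i ∈ s, W i ω) ^ q) ∂P := by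
              apply lintegral_mono fun ω => ?_
              rw [Finset.sum_insert ha]
              exact add_rpow_le _ _ (by linarith)
          _ = 2 ^ q * (∫⁻ ω, W a ω ^ q ∂P + ∫⁻ ω, (∑ i ∈ s, W i ω) ^ q ∂P) := by
              rw [lintegral_const_mul' _ _ (ENNReal.rpow_ne_top_of_nonneg (by linarith) (by norm_num)),
                lintegral_add_left ((hW a).pow_const q)]
      refine ne_top_of_le_ne_top ?_ hb
      exact ENNReal.mul_ne_top (ENNReal.rpow_ne_top_of_nonneg (by linarith) (by norm_num))
        (ENNReal.add_ne_top.2 ⟨hfin a, ih⟩)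

lemma key_step [IsProbabilityMeasure P] {W : ℕ → Ω → ℝ≥0∞} (hW : ∀ n, Measurable (W n))
    (hWne : ∀ n ω, W n ω ≠ ∞)
    (hind : iIndepFun W P)
    {q : ℝ} (hq : 1 ≤ q) (s : Finset ℕ) :
    ∫⁻ ω, (∑ i ∈ s, W i ω) ^ q ∂P ≤
      2 ^ (q - 1) * ((∑ i ∈ s, ∫⁻ ω, W i ω ^ q ∂P)
        + (∑ i ∈ s, ∫⁻ ω, W i ω ∂P)
          * (∫⁻ ω, (∑ i ∈ s, W i ω) ^ q ∂P) ^ ((q - 1) / q)) := by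
  classical
  set S : Ω → ℝ≥0∞ := fun ω => ∑ i ∈ s, W i ω with hS
  have hSm : Measurable S := Finset.measurable_sum s fun i _ => hW i
  have hSne : ∀ ω, S ω ≠ ∞ := fun ω =>
    (ENNReal.sum_lt_top.2 fun i _ => (hWne i ω).lt_top).ne
  have hq0 : (0:ℝ) < q := by linarith
  have hq1 : (0:ℝ) ≤ q - 1 := by linarith
  set D : ℝ≥0∞ := ∫⁻ ω, S ω ^ (q - 1) ∂P with hD
  set A : ℝ≥0∞ := ∫⁻ ω, S ω ^ q ∂P with hA
  -- Hölder: D ≤ A ^ ((q-1)/q)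
  have holder : D ≤ A ^ ((q - 1) / q) := by
    rcases eq_or_lt_of_le hq with heq | hlt
    · simp [hD, ← heq, lintegral_one]
    · have hc : (q / (q - 1)).HolderConjugate q := by
        have := (Real.HolderConjugate.conjExponent hlt).symm
        rwa [Real.conjExponent] at this
      have hH := ENNReal.lintegral_mul_le_Lp_mul_Lq P hc
        (f := fun ω => S ω ^ (q - 1)) (g := fun _ => 1)
        ((hSm.pow_const _).aemeasurable) aemeasurable_const
      simp only [Pi.mul_apply, mul_one, ENNReal.one_rpow, lintegral_one,
        measure_univ] at hH
      have h1 : ∀ ω, (S ω ^ (q - 1)) ^ (q / (q - 1)) = S ω ^ q := by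
        intro ω
        rw [← ENNReal.rpow_mul]
        congr 1
        have hne : q - 1 ≠ 0 := by linarith
        field_simp
      simp only [h1] at hH
      have h2 : (1:ℝ) / (q / (q - 1)) = (q - 1) / q := by
        field_simp
      rwa [h2] at hH
  -- step 1 : A = ∑ i, ∫⁻ W i * S^(q-1)
  have hmeasSq : Measurable fun ω => S ω ^ (q - 1) := hSm.pow_const _
  have step1 : A = ∑ i ∈ s, ∫⁻ ω, W i ω * S ω ^ (q - 1) ∂P := by
    rw [hA, ← lintegral_finset_sum (f := fun i ω => W i ω * S ω ^ (q - 1)) s fun i hi => (hW i).mul hmeasSq]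
    apply lintegral_congr fun ω => ?_
    rw [rpow_self_mul (hSne ω) hq, hS, Finset.sum_mul]
  -- step 2 : per-term bound
  have step2 : ∀ i ∈ s, ∫⁻ ω, W i ω * S ω ^ (q - 1) ∂P ≤
      2 ^ (q - 1) * (∫⁻ ω, W i ω ^ q ∂P + (∫⁻ ω, W i ω ∂P) * D) := by
    intro i hi
    set T : Ω → ℝ≥0∞ := fun ω => ∑ j ∈ s.erase i, W j ω with hT
    have hTm : Measurable T := Finset.measurable_sum _ fun j _ => hW j
    have hTSq : Measurable fun ω => T ω ^ (q - 1) := hTm.pow_const _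
    have hpt : ∀ ω, W i ω * S ω ^ (q - 1) ≤
        2 ^ (q - 1) * (W i ω ^ q + W i ω * T ω ^ (q - 1)) := by
      intro ω
      have hsum : S ω = W i ω + T ω := (Finset.add_sum_erase s (fun j => W j ω) hi).symm
      calc W i ω * S ω ^ (q - 1)
          ≤ W i ω * (2 ^ (q - 1) * (W i ω ^ (q - 1) + T ω ^ (q - 1))) := by
            rw [hsum]; exact mul_le_mul_right (add_rpow_le _ _ hq1) _
        _ = 2 ^ (q - 1) * (W i ω * W i ω ^ (q - 1) + W i ω * T ω ^ (q - 1)) := by ring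
        _ = 2 ^ (q - 1) * (W i ω ^ q + W i ω * T ω ^ (q - 1)) := by
            rw [← rpow_self_mul (hWne i ω) hq]
    have hindWT : IndepFun (W i) (fun ω => T ω ^ (q - 1)) P := by
      have h0 : IndepFun (∑ j ∈ s.erase i, W j) (W i) P :=
        hind.indepFun_finsetSum_of_notMem hW (Finset.notMem_erase i s)
      have h1 := h0.symm.comp measurable_id
        (ENNReal.continuous_rpow_const (y := q - 1)).measurable
      have h2 : ((fun x : ℝ≥0∞ => x ^ (q - 1)) ∘ (∑ j ∈ s.erase i, W j))
          = fun ω => T ω ^ (q - 1) := by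
        funext ω
        simp [hT, Finset.sum_apply]
      rwa [h2] at h1
    have hprod : ∫⁻ ω, W i ω * T ω ^ (q - 1) ∂P
        = (∫⁻ ω, W i ω ∂P) * ∫⁻ ω, T ω ^ (q - 1) ∂P := by
      have := lintegral_mul_eq_lintegral_mul_lintegral_of_indepFun
        (μ := P) (hW i) hTSq hindWT
      simpa [Pi.mul_apply] using this
    have hTle : ∫⁻ ω, T ω ^ (q - 1) ∂P ≤ D := by
      apply lintegral_mono fun ω => ENNReal.rpow_le_rpow ?_ hq1
      exact Finset.sum_le_sum_of_subset (Finset.erase_subset i s)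
    calc ∫⁻ ω, W i ω * S ω ^ (q - 1) ∂P
        ≤ ∫⁻ ω, 2 ^ (q - 1) * (W i ω ^ q + W i ω * T ω ^ (q - 1)) ∂P :=
          lintegral_mono hpt
      _ = 2 ^ (q - 1) * (∫⁻ ω, W i ω ^ q ∂P + ∫⁻ ω, W i ω * T ω ^ (q - 1) ∂P) := by
          rw [lintegral_const_mul' _ _ (ENNReal.rpow_ne_top_of_nonneg hq1 (by norm_num)),
            lintegral_add_left ((hW i).pow_const q)]
      _ ≤ 2 ^ (q - 1) * (∫⁻ ω, W i ω ^ q ∂P + (∫⁻ ω, W i ω ∂P) * D) := by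
          gcongr
          rw [hprod]
          exact mul_le_mul_right hTle _
  calc A ≤ ∑ i ∈ s, 2 ^ (q - 1) * (∫⁻ ω, W i ω ^ q ∂P + (∫⁻ ω, W i ω ∂P) * D) := by
        rw [step1]; exact Finset.sum_le_sum step2
    _ = 2 ^ (q - 1) * ((∑ i ∈ s, ∫⁻ ω, W i ω ^ q ∂P)
        + (∑ i ∈ s, ∫⁻ ω, W i ω ∂P) * D) := by
        rw [← Finset.mul_sum, Finset.sum_add_distrib, Finset.sum_mul]
    _ ≤ _ := by gcongr

lemma rosenthal_ennreal [IsProbabilityMeasure P] {W : ℕ → Ω → ℝ≥0∞}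
    (hW : ∀ n, Measurable (W n)) (hWne : ∀ n ω, W n ω ≠ ∞)
    (hind : iIndepFun W P)
    {q : ℝ} (hq : 1 ≤ q) (hfin : ∀ n, ∫⁻ ω, W n ω ^ q ∂P ≠ ∞) :
    ∫⁻ ω, (∑' n, W n ω) ^ q ∂P ≤
      max (2 * 2 ^ (q - 1)) ((4 * 2 ^ (q - 1)) ^ q)
        * max ((∑' n, ∫⁻ ω, W n ω ∂P) ^ q) (∑' n, ∫⁻ ω, W n ω ^ q ∂P) := by
  have hq0 : (0:ℝ) ≤ q := by linarith
  have hfinset : ∀ s : Finset ℕ, ∫⁻ ω, (∑ i ∈ s, W i ω) ^ q ∂P ≤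
      max (2 * 2 ^ (q - 1)) ((4 * 2 ^ (q - 1)) ^ q)
        * max ((∑ i ∈ s, ∫⁻ ω, W i ω ∂P) ^ q) (∑ i ∈ s, ∫⁻ ω, W i ω ^ q ∂P) :=
    fun s => algebra_step (lintegral_sum_rpow_ne_top hW hq hfin s) hq
      (key_step hW hWne hind hq s)
  have hpt : ∀ ω, (∑' n, W n ω) ^ q = ⨆ N, (∑ i ∈ Finset.range N, W i ω) ^ q := by
    intro ω
    have hmono' : Monotone fun N => (∑ i ∈ Finset.range N, W i ω) ^ q :=
      fun a b hab => ENNReal.rpow_le_rpow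
        (Finset.sum_le_sum_of_subset (Finset.range_subset_range.2 hab)) hq0
    have h1 : Tendsto (fun N => (∑ i ∈ Finset.range N, W i ω) ^ q) atTop
        (𝓝 ((∑' n, W n ω) ^ q)) :=
      (ENNReal.continuous_rpow_const.tendsto _).comp (ENNReal.tendsto_nat_tsum _)
    exact tendsto_nhds_unique h1 (tendsto_atTop_iSup hmono')
  have hle : ∫⁻ ω, (∑' n, W n ω) ^ q ∂P
      = ⨆ N, ∫⁻ ω, (∑ i ∈ Finset.range N, W i ω) ^ q ∂P := by
    simp_rw [hpt]
    rw [lintegral_iSup (fun N => (Finset.measurable_sum _ fun i _ => hW i).pow_const q)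
      (fun a b hab ω => ENNReal.rpow_le_rpow
        (Finset.sum_le_sum_of_subset (Finset.range_subset_range.2 hab)) hq0)]
  rw [hle]
  refine iSup_le fun N => (hfinset _).trans ?_
  gcongr
  · exact ENNReal.sum_le_tsum _
  · exact ENNReal.sum_le_tsum _


end Stmt15Aux

open Stmt15Aux

theorem stmt15 (p : ℝ) (hp : 2 ≤ p) :
    ∃ C : ℝ, 0 < C ∧
    ∀ (Ω : Type) (_ : MeasurableSpace Ω) (P : Measure Ω)
      (_ : IsProbabilityMeasure P) (Z : ℕ → Ω → ℝ),
      iIndepFun Z P →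
      (∀ n ω, 0 ≤ Z n ω) →
      (∀ n, Integrable (Z n) P) →
      (∀ n, Integrable (fun ω => Z n ω ^ (p / 2)) P) →
      Summable (fun n => ∫ ω, Z n ω ∂P) →
      Summable (fun n => ∫ ω, Z n ω ^ (p / 2) ∂P) →
      (∫ ω, (∑' n, Z n ω) ^ (p / 2) ∂P)
        ≤ C * max ((∑' n, ∫ ω, Z n ω ∂P) ^ (p / 2)) (∑' n, ∫ ω, Z n ω ^ (p / 2) ∂P) := by
  set q : ℝ := p / 2 with hqdef
  have hq : 1 ≤ q := by unfold q; linarith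
  have hq0 : (0:ℝ) ≤ q := by linarith
  set Cmax : ℝ≥0∞ := max (2 * 2 ^ (q - 1)) ((4 * 2 ^ (q - 1)) ^ q) with hCmax
  have hCne : Cmax ≠ ∞ := by
    rw [hCmax, Ne, max_eq_top]
    push_neg
    constructor
    · exact ENNReal.mul_ne_top (by norm_num)
        (ENNReal.rpow_ne_top_of_nonneg (by linarith) (by norm_num))
    · exact ENNReal.rpow_ne_top_of_nonneg hq0
        (ENNReal.mul_ne_top (by norm_num)
          (ENNReal.rpow_ne_top_of_nonneg (by linarith) (by norm_num)))
  have hC0 : Cmax ≠ 0 := by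
    intro h
    have h1 : (2:ℝ≥0∞) * 2 ^ (q - 1) ≤ Cmax := le_max_left _ _
    rw [h, nonpos_iff_eq_zero, mul_eq_zero] at h1
    rcases h1 with h1 | h1
    · norm_num at h1
    · exact (ENNReal.rpow_pos (by norm_num) (by norm_num)).ne' h1
  refine ⟨Cmax.toReal, ENNReal.toReal_pos hC0 hCne, ?_⟩
  intro Ω mΩ P hP Z hindep hpos hint hintq hsum1 hsum2
  -- measurable modifications
  set W₀ : ℕ → Ω → ℝ := fun n => (hint n).1.mk (Z n) with hW₀
  have hW₀m : ∀ n, Measurable (W₀ n) := fun n => (hint n).1.stronglyMeasurable_mk.measurable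
  have hW₀eq : ∀ n, Z n =ᵐ[P] W₀ n := fun n => (hint n).1.ae_eq_mk
  set W : ℕ → Ω → ℝ≥0∞ := fun n ω => ENNReal.ofReal (W₀ n ω) with hW
  have hWm : ∀ n, Measurable (W n) := fun n => ENNReal.measurable_ofReal.comp (hW₀m n)
  have hWne : ∀ n ω, W n ω ≠ ∞ := fun n ω => ENNReal.ofReal_ne_top
  have hWae : ∀ n, (fun ω => ENNReal.ofReal (Z n ω)) =ᵐ[P] W n := by
    intro n
    filter_upwards [hW₀eq n] with ω hω
    rw [hW]; simp only; rw [hω]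
  -- independence of W
  have hindW : iIndepFun W P := by
    have h1 : iIndepFun
        (fun n => ENNReal.ofReal ∘ Z n) P :=
      hindep.comp (fun _ => ENNReal.ofReal) (fun _ => ENNReal.measurable_ofReal)
    exact iIndepFun_ae_congr h1 hWae
  -- moment identifications
  have hm1 : ∀ n, ∫⁻ ω, W n ω ∂P = ENNReal.ofReal (∫ ω, Z n ω ∂P) := by
    intro n
    rw [← lintegral_congr_ae (hWae n),
      ← ofReal_integral_eq_lintegral_ofReal (hint n) (Filter.Eventually.of_forall (hpos n))]
  have hmq : ∀ n, ∫⁻ ω, W n ω ^ q ∂P = ENNReal.ofReal (∫ ω, Z n ω ^ q ∂P) := by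
    intro n
    have h1 : (fun ω => W n ω ^ q) =ᵐ[P] fun ω => ENNReal.ofReal (Z n ω ^ q) := by
      filter_upwards [hWae n] with ω hω
      rw [← hω, ENNReal.ofReal_rpow_of_nonneg (hpos n ω) hq0]
    rw [lintegral_congr_ae h1,
      ← ofReal_integral_eq_lintegral_ofReal (hintq n)
        (Filter.Eventually.of_forall fun ω => Real.rpow_nonneg (hpos n ω) q)]
  have hfinq : ∀ n, ∫⁻ ω, W n ω ^ q ∂P ≠ ∞ := fun n => by
    rw [hmq n]; exact ENNReal.ofReal_ne_top
  -- sums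
  have hm : ∑' n, ∫⁻ ω, W n ω ∂P = ENNReal.ofReal (∑' n, ∫ ω, Z n ω ∂P) := by
    simp_rw [hm1]
    rw [ENNReal.ofReal_tsum_of_nonneg (fun n => integral_nonneg (hpos n)) hsum1]
  have hB : ∑' n, ∫⁻ ω, W n ω ^ q ∂P = ENNReal.ofReal (∑' n, ∫ ω, Z n ω ^ q ∂P) := by
    simp_rw [hmq]
    rw [ENNReal.ofReal_tsum_of_nonneg
      (fun n => integral_nonneg fun ω => Real.rpow_nonneg (hpos n ω) q) hsum2]
  -- RHS as ofReal
  have ha : (0:ℝ) ≤ ∑' n, ∫ ω, Z n ω ∂P :=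
    tsum_nonneg fun n => integral_nonneg (hpos n)
  have hb : (0:ℝ) ≤ ∑' n, ∫ ω, Z n ω ^ q ∂P :=
    tsum_nonneg fun n => integral_nonneg fun ω => Real.rpow_nonneg (hpos n ω) q
  have hRHS : Cmax * max ((∑' n, ∫⁻ ω, W n ω ∂P) ^ q) (∑' n, ∫⁻ ω, W n ω ^ q ∂P)
      = ENNReal.ofReal (Cmax.toReal
          * max ((∑' n, ∫ ω, Z n ω ∂P) ^ q) (∑' n, ∫ ω, Z n ω ^ q ∂P)) := by
    rw [hm, hB, ENNReal.ofReal_rpow_of_nonneg ha hq0,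
      ENNReal.ofReal_mul (ENNReal.toReal_nonneg),
      Monotone.map_max (f := ENNReal.ofReal) (fun x y h => ENNReal.ofReal_le_ofReal h),
      ENNReal.ofReal_toReal hCne]
  -- a.e. identification of the real tsum
  have haegood : ∀ᵐ ω ∂P, ∀ n, ENNReal.ofReal (Z n ω) = W n ω := ae_all_iff.2 hWae
  have hmeasR : AEStronglyMeasurable (fun ω => (∑' n, Z n ω) ^ q) P := by
    have hmeas2 : Measurable fun ω => ((∑' n, W n ω).toReal) ^ q :=
      ((Measurable.ennreal_tsum hWm).ennreal_toReal).pow_const q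
    apply (hmeas2.aestronglyMeasurable).congr
    filter_upwards [haegood] with ω hω
    have h1 : ∑' n, Z n ω = (∑' n, W n ω).toReal := by
      rw [ENNReal.tsum_toReal_eq fun n => hWne n ω]
      congr 1
      funext n
      rw [← hω n, ENNReal.toReal_ofReal (hpos n ω)]
    rw [h1]
  -- left side conversion
  have hnn : 0 ≤ᵐ[P] fun ω => (∑' n, Z n ω) ^ q :=
    Filter.Eventually.of_forall fun ω =>
      Real.rpow_nonneg (tsum_nonneg fun n => hpos n ω) q
  rw [integral_eq_lintegral_of_nonneg_ae hnn hmeasR]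
  have hlhs : ∫⁻ ω, ENNReal.ofReal ((∑' n, Z n ω) ^ q) ∂P
      ≤ ∫⁻ ω, (∑' n, W n ω) ^ q ∂P := by
    apply lintegral_mono_ae
    filter_upwards [haegood] with ω hω
    by_cases hsummable : Summable fun n => Z n ω
    · have h1 : ENNReal.ofReal (∑' n, Z n ω) = ∑' n, W n ω := by
        rw [ENNReal.ofReal_tsum_of_nonneg (fun n => hpos n ω) hsummable]
        exact tsum_congr fun n => hω n
      rw [← ENNReal.ofReal_rpow_of_nonneg (tsum_nonneg fun n => hpos n ω) hq0, h1]
    · rw [tsum_eq_zero_of_not_summable hsummable,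
        Real.zero_rpow (by linarith : q ≠ 0), ENNReal.ofReal_zero]
      exact zero_le
  have hmain := (hlhs.trans (rosenthal_ennreal hWm hWne hindW hq hfinq)).trans_eq hRHS
  calc (∫⁻ ω, ENNReal.ofReal ((∑' n, Z n ω) ^ q) ∂P).toReal
      ≤ (ENNReal.ofReal (Cmax.toReal
          * max ((∑' n, ∫ ω, Z n ω ∂P) ^ q) (∑' n, ∫ ω, Z n ω ^ q ∂P))).toReal := by
        exact ENNReal.toReal_mono ENNReal.ofReal_ne_top hmain
    _ = Cmax.toReal * max ((∑' n, ∫ ω, Z n ω ∂P) ^ q) (∑' n, ∫ ω, Z n ω ^ q ∂P) := by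
        rw [ENNReal.toReal_ofReal]
        apply mul_nonneg ENNReal.toReal_nonneg
        exact le_trans (Real.rpow_nonneg ha q) (le_max_left _ _)
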